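/- arXiv:2511.05472 — 2 statements merged into one kernel-verified Lean document; each statement's English description precedes it below -/
import Mathlib

section
/- Let α, β, α', β' ∈ ℝ/2πℤ and suppose the pairs of diagonal SU(2) matrices (diag(e^{iα}, e^{-iα}), diag(e^{iβ}, e^{-iβ})) and (diag(e^{iα'}, e^{-iα'}), diag(e^{iβ'}, e^{-iβ'})) are simultaneously conjugate in SU(2), i.e. there is U ∈ SU(2) conjugating the first pair to the second. Then (α', β') = (α, β) or (α', β') = (-α, -β) in (ℝ/2πℤ)². -/
/-- `SU(2)`: the subgroup of the unitary group of 2×2 complex matrices with determinant 1. -/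
def SU2 : Subgroup (Matrix.unitaryGroup (Fin 2) ℂ) :=
  MonoidHom.ker (Matrix.detMonoidHom.comp (Matrix.unitaryGroup (Fin 2) ℂ).subtype)

/-- The underlying 2×2 complex matrix of an element of `SU(2)`. -/
def SU2.mat (U : SU2) : Matrix (Fin 2) (Fin 2) ℂ := U.1.1

/-- The diagonal matrix `diag(e^{iα}, e^{-iα})`. -/
noncomputable def diagAngle (α : ℝ) : Matrix (Fin 2) (Fin 2) ℂ :=
  !![Complex.exp (α * Complex.I), 0; 0, Complex.exp (-α * Complex.I)]

lemma exp_angle_eq {a b : ℝ} (h : Complex.exp (a * Complex.I) = Complex.exp (b * Complex.I)) :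
    (a : Real.Angle) = (b : Real.Angle) := by
  rw [Complex.exp_eq_exp_iff_exists_int] at h
  obtain ⟨n, hn⟩ := h
  rw [Real.Angle.angle_eq_iff_two_pi_dvd_sub]
  refine ⟨n, ?_⟩
  have h2 : (a : ℂ) = b + n * (2 * Real.pi) :=
    mul_right_cancel₀ Complex.I_ne_zero (by linear_combination hn)
  have hr : a = b + n * (2 * Real.pi) := by exact_mod_cast h2
  linarith [hr]

/-- If the pairs of diagonal matrices `(diag(e^{iα}, e^{-iα}), diag(e^{iβ}, e^{-iβ}))` and
`(diag(e^{iα'}, e^{-iα'}), diag(e^{iβ'}, e^{-iβ'}))` are simultaneously conjugate in `SU(2)`,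
then `(α', β') = (α, β)` or `(α', β') = (-α, -β)` in `(ℝ/2πℤ)²`. -/
theorem pillowcase_conjugate_pairs (α β α' β' : ℝ)
    (U : SU2)
    (hA : SU2.mat U * diagAngle α * (SU2.mat U)⁻¹ = diagAngle α')
    (hB : SU2.mat U * diagAngle β * (SU2.mat U)⁻¹ = diagAngle β') :
    ((α' : Real.Angle) = (α : Real.Angle) ∧ (β' : Real.Angle) = (β : Real.Angle)) ∨
    ((α' : Real.Angle) = -(α : Real.Angle) ∧ (β' : Real.Angle) = -(β : Real.Angle)) := by
  set M := SU2.mat U with hM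
  have hdet : M.det = 1 := U.2
  have hMU : M ∈ Matrix.unitaryGroup (Fin 2) ℂ := U.1.2
  have hUnit : M * star M = 1 := Matrix.mem_unitaryGroup_iff.mp hMU
  have hinv : M⁻¹ * M = 1 := Matrix.nonsing_inv_mul M (by simp [hdet])
  have hA' : M * diagAngle α = diagAngle α' * M := by
    have h := congrArg (· * M) hA
    simpa [mul_assoc, hinv] using h
  have hB' : M * diagAngle β = diagAngle β' * M := by
    have h := congrArg (· * M) hB
    simpa [mul_assoc, hinv] using h
  have a00 : M 0 0 * Complex.exp (α * Complex.I) = Complex.exp (α' * Complex.I) * M 0 0 := by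
    have h : (M * diagAngle α) 0 0 = (diagAngle α' * M) 0 0 := by rw [hA']
    simpa [diagAngle, Matrix.mul_apply, Fin.sum_univ_two] using h
  have a01 : M 0 1 * Complex.exp (-α * Complex.I) = Complex.exp (α' * Complex.I) * M 0 1 := by
    have h : (M * diagAngle α) 0 1 = (diagAngle α' * M) 0 1 := by rw [hA']
    simpa [diagAngle, Matrix.mul_apply, Fin.sum_univ_two] using h
  have b00 : M 0 0 * Complex.exp (β * Complex.I) = Complex.exp (β' * Complex.I) * M 0 0 := by
    have h : (M * diagAngle β) 0 0 = (diagAngle β' * M) 0 0 := by rw [hB']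
    simpa [diagAngle, Matrix.mul_apply, Fin.sum_univ_two] using h
  have b01 : M 0 1 * Complex.exp (-β * Complex.I) = Complex.exp (β' * Complex.I) * M 0 1 := by
    have h : (M * diagAngle β) 0 1 = (diagAngle β' * M) 0 1 := by rw [hB']
    simpa [diagAngle, Matrix.mul_apply, Fin.sum_univ_two] using h
  by_cases h0 : M 0 0 = 0
  · right
    have hb : M 0 1 ≠ 0 := by
      have h1 : (M * star M) 0 0 = (1 : Matrix (Fin 2) (Fin 2) ℂ) 0 0 := by rw [hUnit]
      simp [Matrix.mul_apply, Fin.sum_univ_two, Matrix.star_apply, h0] at h1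
      intro hb0
      rw [hb0] at h1
      simp at h1
    have hα : Complex.exp (α' * Complex.I) = Complex.exp (((-α : ℝ) : ℂ) * Complex.I) := by
      apply mul_right_cancel₀ hb
      push_cast
      linear_combination -a01
    have hβ : Complex.exp (β' * Complex.I) = Complex.exp (((-β : ℝ) : ℂ) * Complex.I) := by
      apply mul_right_cancel₀ hb
      push_cast
      linear_combination -b01
    constructor
    · simpa [Real.Angle.coe_neg] using exp_angle_eq hα
    · simpa [Real.Angle.coe_neg] using exp_angle_eq hβ
  · left
    have hα : Complex.exp (α' * Complex.I) = Complex.exp ((α : ℂ) * Complex.I) := by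
      apply mul_right_cancel₀ h0
      linear_combination -a00
    have hβ : Complex.exp (β' * Complex.I) = Complex.exp ((β : ℂ) * Complex.I) := by
      apply mul_right_cancel₀ h0
      linear_combination -b00
    exact ⟨exp_angle_eq hα, exp_angle_eq hβ⟩
end

section
/- Let A, B ∈ SU(2) satisfy A B A⁻¹ B⁻¹ = -I. Then there exists U ∈ SU(2) with U A U⁻¹ = i (i.e., the matrix diag(i, -i)) and U B U⁻¹ = j (i.e., the matrix with rows (0, 1) and (-1, 0)). -/
lemma su2_mk_mem (u v : ℂ) (h : u * star u + v * star v = 1) :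
    !![u, v; -star v, star u] ∈ Matrix.unitaryGroup (Fin 2) ℂ := by
  rw [Matrix.mem_unitaryGroup_iff]
  ext i j
  fin_cases i <;> fin_cases j <;>
    simp [Matrix.mul_apply, Fin.sum_univ_two, Matrix.one_apply] <;> ring_nf <;>
    simp [mul_comm] at h ⊢ <;> linear_combination h

lemma su2_mk_mem' (u v : ℂ) (h : u * star u + v * star v = 1) :
    (⟨!![u, v; -star v, star u], su2_mk_mem u v h⟩ : Matrix.unitaryGroup (Fin 2) ℂ) ∈ SU2 := by
  have : (!![u, v; -star v, star u] : Matrix (Fin 2) (Fin 2) ℂ).det = 1 := by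
    rw [Matrix.det_fin_two]
    simp only [RCLike.star_def] at h ⊢
    simp
    linear_combination h
  exact this

def SU2.mk (u v : ℂ) (h : u * star u + v * star v = 1) : SU2 :=
  ⟨⟨!![u, v; -star v, star u], su2_mk_mem u v h⟩, su2_mk_mem' u v h⟩

lemma SU2.mk_mat (u v : ℂ) (h) : SU2.mat (SU2.mk u v h) = !![u, v; -star v, star u] := rfl

lemma su2_structure (M : SU2) :
    SU2.mat M = !![SU2.mat M 0 0, SU2.mat M 0 1;
      -star (SU2.mat M 0 1), star (SU2.mat M 0 0)] ∧
    SU2.mat M 0 0 * star (SU2.mat M 0 0) + SU2.mat M 0 1 * star (SU2.mat M 0 1) = 1 := by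
  set N := SU2.mat M with hN
  have h1 : N * star N = 1 := M.1.2.2
  have hdet : N.det = 1 := M.2
  have hadj : N * N.adjugate = 1 := by rw [Matrix.mul_adjugate, hdet, one_smul]
  have hinv : star N = N.adjugate := by
    rw [← Matrix.inv_eq_right_inv h1, ← Matrix.inv_eq_right_inv hadj]
  have h10 : N 1 0 = -star (N 0 1) := by
    have := congrFun (congrFun hinv 0) 1
    rw [Matrix.adjugate_fin_two] at this
    simp [Matrix.star_apply] at this
    have h2 := congrArg (starRingEnd ℂ) this
    simpa [RCLike.star_def] using h2
  have h11 : N 1 1 = star (N 0 0) := by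
    have := congrFun (congrFun hinv 1) 1
    rw [Matrix.adjugate_fin_two] at this
    simp [Matrix.star_apply] at this
    have h2 := congrArg (starRingEnd ℂ) this
    simpa [RCLike.star_def] using h2
  constructor
  · ext i j
    fin_cases i <;> fin_cases j <;> simp [h10, h11]
  · have := congrFun (congrFun h1 0) 0
    simpa [Matrix.mul_apply, Fin.sum_univ_two, Matrix.star_apply] using this

lemma su2_conj_eq (U X : SU2) (D : Matrix (Fin 2) (Fin 2) ℂ)
    (hE : SU2.mat U * SU2.mat X = D * SU2.mat U) :
    SU2.mat (U * X * U⁻¹) = D := by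
  have hUU : SU2.mat U * star (SU2.mat U) = 1 := U.1.2.2
  show SU2.mat U * SU2.mat X * star (SU2.mat U) = D
  rw [hE, mul_assoc, hUU, mul_one]

/-- If `A, B ∈ SU(2)` satisfy `A B A⁻¹ B⁻¹ = -I`, then the pair `(A, B)` is simultaneously
conjugate in `SU(2)` to the quaternionic pair `(i, j)`, i.e. to
`(diag(i, -i), [[0,1],[-1,0]])`. -/
theorem commutator_neg_one_conjugate_to_ij (A B : SU2)
    (h : SU2.mat (A * B * A⁻¹ * B⁻¹) = -1) :
    ∃ U : SU2,
      SU2.mat (U * A * U⁻¹) = !![Complex.I, 0; 0, -Complex.I] ∧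
      SU2.mat (U * B * U⁻¹) = !![0, 1; -1, 0] := by
  obtain ⟨hAe, hAn⟩ := su2_structure A
  obtain ⟨hBe, hBn⟩ := su2_structure B
  set a := SU2.mat A 0 0 with ha0
  set b := SU2.mat A 0 1 with hb0
  set p := SU2.mat B 0 0 with hp0
  set q := SU2.mat B 0 1 with hq0
  have hAA : star (SU2.mat A) * SU2.mat A = 1 := A.1.2.1
  have hBB : SU2.mat B * star (SU2.mat B) = 1 := B.1.2.2
  have hBB' : star (SU2.mat B) * SU2.mat B = 1 := B.1.2.1
  -- anticommutation
  have hm : SU2.mat A * SU2.mat B * star (SU2.mat A) * star (SU2.mat B) = -1 := h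
  have hanti : SU2.mat A * SU2.mat B = -(SU2.mat B * SU2.mat A) := by
    have e1 : SU2.mat A * SU2.mat B * star (SU2.mat A) * star (SU2.mat B) *
        (SU2.mat B * SU2.mat A) = SU2.mat A * SU2.mat B := by
      rw [mul_assoc (SU2.mat A * SU2.mat B * star (SU2.mat A)), ← mul_assoc (star (SU2.mat B)),
        hBB', one_mul, mul_assoc, hAA, mul_one]
    rw [hm, neg_one_mul] at e1
    exact e1.symm
  have hanti' : SU2.mat B * SU2.mat A = -(SU2.mat A * SU2.mat B) := by
    rw [hanti, neg_neg]
  -- traces vanish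
  have htrace : ∀ (X Y : SU2), SU2.mat X * SU2.mat Y = -(SU2.mat Y * SU2.mat X) →
      (SU2.mat X).trace = 0 := by
    intro X Y hXY
    have hYY : SU2.mat Y * star (SU2.mat Y) = 1 := Y.1.2.2
    have hYY' : star (SU2.mat Y) * SU2.mat Y = 1 := Y.1.2.1
    have e2 : SU2.mat X = -(SU2.mat Y * SU2.mat X * star (SU2.mat Y)) := by
      calc SU2.mat X = SU2.mat X * (SU2.mat Y * star (SU2.mat Y)) := by rw [hYY, mul_one]
      _ = (SU2.mat X * SU2.mat Y) * star (SU2.mat Y) := by rw [mul_assoc]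
      _ = -(SU2.mat Y * SU2.mat X) * star (SU2.mat Y) := by rw [hXY]
      _ = -(SU2.mat Y * SU2.mat X * star (SU2.mat Y)) := by rw [neg_mul]
    have e3 := congrArg Matrix.trace e2
    rw [Matrix.trace_neg, Matrix.trace_mul_comm (SU2.mat Y * SU2.mat X), ← mul_assoc,
      hYY', one_mul] at e3
    have e4 : (2 : ℂ) * (SU2.mat X).trace = 0 := by linear_combination e3
    have := mul_eq_zero.mp e4
    rcases this with h2 | h2
    · exact absurd h2 two_ne_zero
    · exact h2
  have htrA := htrace A B hanti
  have htrB := htrace B A hanti'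
  have hA11 : SU2.mat A 1 1 = star a := by rw [hAe]; rfl
  have hB11 : SU2.mat B 1 1 = star p := by rw [hBe]; rfl
  rw [Matrix.trace_fin_two, hA11] at htrA
  rw [Matrix.trace_fin_two, hB11] at htrB
  rw [← ha0] at htrA
  rw [← hp0] at htrB
  have hsa : (starRingEnd ℂ) a = -a := by rw [← RCLike.star_def]; linear_combination htrA
  have hsp : (starRingEnd ℂ) p = -p := by rw [← RCLike.star_def]; linear_combination htrB
  set α := a.im with hα0
  set β := p.im with hβ0
  have ha : a = (α : ℂ) * Complex.I := by
    have hre : a.re = 0 := by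
      have := congrArg Complex.re hsa
      simp at this
      linarith
    apply Complex.ext <;> simp [hre, hα0]
  have hp : p = (β : ℂ) * Complex.I := by
    have hre : p.re = 0 := by
      have := congrArg Complex.re hsp
      simp at this
      linarith
    apply Complex.ext <;> simp [hre, hβ0]
  have hstara : star a = -((α : ℂ) * Complex.I) := by
    rw [RCLike.star_def, hsa, ha]
  have hstarp : star p = -((β : ℂ) * Complex.I) := by
    rw [RCLike.star_def, hsp, hp]
  have hAe' : SU2.mat A = !![(α : ℂ) * Complex.I, b;
      -(starRingEnd ℂ) b, -((α : ℂ) * Complex.I)] := by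
    rw [hAe, hstara, ha]; rfl
  have hBe' : SU2.mat B = !![(β : ℂ) * Complex.I, q;
      -(starRingEnd ℂ) q, -((β : ℂ) * Complex.I)] := by
    rw [hBe, hstarp, hp]; rfl
  -- scalar relations
  have hb : b * (starRingEnd ℂ) b = 1 - (α : ℂ)^2 := by
    simp only [RCLike.star_def] at hAn
    rw [hsa, ha] at hAn
    linear_combination hAn + (α : ℂ)^2 * Complex.I_sq
  have hq : q * (starRingEnd ℂ) q = 1 - (β : ℂ)^2 := by
    simp only [RCLike.star_def] at hBn
    rw [hsp, hp] at hBn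
    linear_combination hBn + (β : ℂ)^2 * Complex.I_sq
  have hbq : b * (starRingEnd ℂ) q + q * (starRingEnd ℂ) b = -2 * (α : ℂ) * (β : ℂ) := by
    have h00 := congrFun (congrFun hanti 0) 0
    rw [hAe', hBe'] at h00
    simp [Matrix.mul_apply, Fin.sum_univ_two] at h00
    linear_combination (-1 : ℂ) * h00 + 2 * (α : ℂ) * (β : ℂ) * Complex.I_sq
  have hbR : Complex.normSq b = 1 - α^2 := by
    have := hb
    rw [Complex.mul_conj] at this
    exact_mod_cast this
  by_cases hcase : α = -1
  · -- degenerate case : a = -I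
    have hbz : b = 0 := by
      have : Complex.normSq b = 0 := by rw [hbR, hcase]; ring
      exact Complex.normSq_eq_zero.mp this
    have hβz : β = 0 := by
      have h2 : (0 : ℂ) = -2 * (α : ℂ) * (β : ℂ) := by
        rw [← hbq, hbz]; ring_nf; simp
      rw [hcase] at h2
      push_cast at h2
      have hββ : ((β : ℝ) : ℂ) = 0 := by linear_combination -h2 / 2
      exact_mod_cast hββ
    have hq1 : q * (starRingEnd ℂ) q = 1 := by rw [hq, hβz]; norm_num
    obtain ⟨v, hv⟩ : ∃ v : ℂ, v ^ 2 = q := IsAlgClosed.exists_pow_nat_eq q (by norm_num : 0 < 2)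
    have hvv : v * (starRingEnd ℂ) v = 1 := by
      have hvc : ((starRingEnd ℂ) v) ^ 2 = (starRingEnd ℂ) q := by
        rw [← map_pow, hv]
      have hsq : (Complex.normSq v) ^ 2 = 1 := by
        have hc : ((Complex.normSq v : ℝ) : ℂ) ^ 2 = 1 := by
          rw [← Complex.mul_conj v]
          calc (v * (starRingEnd ℂ) v) ^ 2 = v^2 * ((starRingEnd ℂ) v)^2 := by ring
          _ = q * (starRingEnd ℂ) q := by rw [hv, hvc]
          _ = 1 := hq1
        exact_mod_cast hc
      have hnn : 0 ≤ Complex.normSq v := Complex.normSq_nonneg v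
      have hfac : (Complex.normSq v - 1) * (Complex.normSq v + 1) = 0 := by
        linear_combination hsq
      rcases mul_eq_zero.mp hfac with h2 | h2
      · have : Complex.normSq v = 1 := by linarith
        rw [Complex.mul_conj, this]; norm_num
      · nlinarith
    have hUn : (0 : ℂ) * star 0 + v * star v = 1 := by
      simpa [RCLike.star_def] using hvv
    refine ⟨SU2.mk 0 v hUn, su2_conj_eq _ _ _ ?_, su2_conj_eq _ _ _ ?_⟩
    · rw [SU2.mk_mat, hAe', hbz, hcase]
      ext i j
      fin_cases i <;> fin_cases j <;>
        simp [Matrix.mul_apply, Fin.sum_univ_two, RCLike.star_def] <;> ring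
    · rw [SU2.mk_mat, hBe', hβz]
      have hvne : v ≠ 0 := by
        intro h0; rw [h0] at hvv; simp at hvv
      ext i j
      fin_cases i <;> fin_cases j <;>
        simp [Matrix.mul_apply, Fin.sum_univ_two, RCLike.star_def]
      · -- entry (0,0): v * -conj q = -conj v  (modulo simp normal form)
        apply mul_left_cancel₀ hvne
        linear_combination (starRingEnd ℂ) q * hv + hq1 - hvv
      · -- entry (1,1)
        apply mul_left_cancel₀ hvne
        linear_combination q * hvv - hv
  · -- main case
    have hα1 : (0:ℝ) < 1 + α := by
      have h1 : -1 ≤ α := by nlinarith [Complex.normSq_nonneg b]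
      have h2 : 1 + α ≠ 0 := fun h2 => hcase (by linarith)
      rcases lt_or_eq_of_le (by linarith : (0:ℝ) ≤ 1 + α) with h3 | h3
      · exact h3
      · exact absurd h3.symm h2
    have hw : ((1 + (α:ℝ) : ℝ) * q - (β:ℂ) * b) *
        ((1 + (α:ℝ) : ℝ) * (starRingEnd ℂ) q - (β:ℂ) * (starRingEnd ℂ) b)
        = ((1 + (α:ℝ) : ℝ) : ℂ)^2 := by
      push_cast
      linear_combination (1 + (α:ℂ))^2 * hq + (-(1 + (α:ℂ)) * (β:ℂ)) * hbq + (β:ℂ)^2 * hb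
    obtain ⟨l, hl⟩ : ∃ l : ℂ, l ^ 2 = -1 / (2 * (((1 + α : ℝ)) * q - (β:ℂ) * b)) :=
      IsAlgClosed.exists_pow_nat_eq _ (by norm_num : 0 < 2)
    have hwne : (((1 + α : ℝ)) * q - (β:ℂ) * b) ≠ 0 := by
      intro h0
      rw [h0, zero_mul] at hw
      have : ((1 + α : ℝ) : ℂ) ≠ 0 := by
        exact_mod_cast ne_of_gt hα1
      exact this (by
        have := pow_eq_zero_iff (n := 2) (by norm_num) |>.mp hw.symm
        exact this)
    have h2w : (2:ℂ) * (((1 + α : ℝ)) * q - (β:ℂ) * b) ≠ 0 := mul_ne_zero two_ne_zero hwne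
    have H4 : (2 * (((1 + α : ℝ)) * q - (β:ℂ) * b)) * l ^ 2 = -1 := by
      rw [hl, mul_comm]
      exact div_mul_cancel₀ _ h2w
    have hlne : l ≠ 0 := by
      intro h0; rw [h0] at H4; simp at H4
    have h4c : (2 * (((1 + α : ℝ)) * (starRingEnd ℂ) q - (β:ℂ) * (starRingEnd ℂ) b)) *
        ((starRingEnd ℂ) l) ^ 2 = -1 := by
      have := congrArg (starRingEnd ℂ) H4
      simpa [map_mul, map_sub, map_pow, map_ofNat, Complex.conj_ofReal] using this
    have hm2 : ((2 * (((1 + α : ℝ)) * q - (β:ℂ) * b)) * l ^ 2) *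
        ((2 * (((1 + α : ℝ)) * (starRingEnd ℂ) q - (β:ℂ) * (starRingEnd ℂ) b)) *
          ((starRingEnd ℂ) l) ^ 2) = 1 := by
      rw [H4, h4c]; norm_num
    push_cast at hw H4 h4c hm2
    have hreal : Complex.normSq l * (2 * (1 + α)) = 1 := by
      have hsq : (Complex.normSq l * (2 * (1 + α))) ^ 2 = 1 := by
        have hc : ((Complex.normSq l * (2 * (1 + α)) : ℝ) : ℂ) ^ 2 = 1 := by
          push_cast
          rw [← Complex.mul_conj l]
          linear_combination (-(4 * (l * (starRingEnd ℂ) l) ^ 2)) * hw + hm2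
        exact_mod_cast hc
      have hnn : 0 ≤ Complex.normSq l * (2 * (1 + α)) :=
        mul_nonneg (Complex.normSq_nonneg l) (by linarith)
      have hfac : (Complex.normSq l * (2 * (1 + α)) - 1) *
          (Complex.normSq l * (2 * (1 + α)) + 1) = 0 := by linear_combination hsq
      rcases mul_eq_zero.mp hfac with h2 | h2
      · linarith
      · nlinarith
    have H5 : l * (starRingEnd ℂ) l * (2 * (1 + (α:ℂ))) = 1 := by
      rw [Complex.mul_conj]
      have : ((Complex.normSq l * (2 * (1 + α)) : ℝ) : ℂ) = 1 := by
        rw [hreal]; norm_num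
      push_cast at this
      linear_combination this
    -- build U
    have hUn : (l * ((α:ℂ) * Complex.I + Complex.I)) * star (l * ((α:ℂ) * Complex.I + Complex.I))
        + (l * b) * star (l * b) = 1 := by
      simp only [RCLike.star_def, map_mul, map_add, Complex.conj_ofReal, Complex.conj_I]
      linear_combination (-(l * (starRingEnd ℂ) l) * (1 + (α:ℂ))^2) * Complex.I_sq
        + (l * (starRingEnd ℂ) l) * hb + H5
    refine ⟨SU2.mk _ _ hUn, su2_conj_eq _ _ _ ?_, su2_conj_eq _ _ _ ?_⟩
    · rw [SU2.mk_mat, hAe']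
      ext i j
      fin_cases i <;> fin_cases j <;>
        simp [Matrix.mul_apply, Fin.sum_univ_two, RCLike.star_def, map_mul, map_add,
          Complex.conj_ofReal, Complex.conj_I]
      · linear_combination (l * ((α:ℂ)^2 - 1)) * Complex.I_sq + (-l) * hb
      · ring
      · ring
      · linear_combination ((starRingEnd ℂ) l * ((α:ℂ)^2 - 1)) * Complex.I_sq
          + (-(starRingEnd ℂ) l) * hb
    · rw [SU2.mk_mat, hBe']
      have h1c : (1 + (α:ℂ)) ≠ 0 := by
        have : ((1 + α : ℝ) : ℂ) ≠ 0 := by exact_mod_cast ne_of_gt hα1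
        push_cast at this; exact this
      have hcne : (2 * (1 + (α:ℂ)) * l) ≠ 0 :=
        mul_ne_zero (mul_ne_zero two_ne_zero h1c) hlne
      have hlcne : (2 * (1 + (α:ℂ)) * (starRingEnd ℂ) l) ≠ 0 :=
        mul_ne_zero (mul_ne_zero two_ne_zero h1c) (by simpa using hlne)
      have H4' := H4
      have h4c' := h4c
      have H5' := H5
      ext i j
      fin_cases i <;> fin_cases j <;>
        simp [Matrix.mul_apply, Fin.sum_univ_two, RCLike.star_def, map_mul, map_add,
          Complex.conj_ofReal, Complex.conj_I]
      · apply mul_left_cancel₀ hcne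
        linear_combination (2 * (β:ℂ) * (1 + (α:ℂ))^2 * l^2) * Complex.I_sq
          + (starRingEnd ℂ) b * H5' + (starRingEnd ℂ) b * H4'
          + (-(2 * (1 + (α:ℂ)) * l^2)) * hbq + (2 * (β:ℂ) * l^2) * hb
      · apply mul_left_cancel₀ hcne
        linear_combination (Complex.I * (1 + (α:ℂ))) * H4' + (Complex.I * (1 + (α:ℂ))) * H5'
      · apply mul_left_cancel₀ hlcne
        linear_combination (Complex.I * (1 + (α:ℂ))) * h4c' + (Complex.I * (1 + (α:ℂ))) * H5'
      · apply mul_left_cancel₀ hlcne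
        linear_combination (2 * (β:ℂ) * (1 + (α:ℂ))^2 * ((starRingEnd ℂ) l)^2) * Complex.I_sq
          + b * H5' + b * h4c'
          + (-(2 * (1 + (α:ℂ)) * ((starRingEnd ℂ) l)^2)) * hbq
          + (2 * (β:ℂ) * ((starRingEnd ℂ) l)^2) * hb
end
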